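/- Let n ≥ 1 and work in the polynomial ring 𝔽₂[x₁,…,x_n]. Let y₁,…,y_n be homogeneous linear forms that constitute an 𝔽₂-basis of the space of homogeneous linear forms, and let N ≥ 2 be an integer that is not a power of 2. If z is a nonzero homogeneous linear form such that z^N lies in the 𝔽₂-linear span of {y₁^N, …, y_n^N}, then z = y_i for some i. -/

import Mathlib

open MvPolynomial

section AuxStmt15

private lemma aux_dual_sq : ((1 : DualNumber (ZMod 2)) + DualNumber.eps) ^ 2 = 1 := by
  have h2 : (DualNumber.eps : DualNumber (ZMod 2)) + DualNumber.eps = 0 := by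
    rw [← two_smul (ZMod 2)]
    exact smul_eq_zero_of_left (by decide) _
  rw [sq, mul_add, add_mul, add_mul, mul_one, one_mul, mul_one, DualNumber.eps_mul_eps]
  rw [add_zero, add_assoc, h2, add_zero]

private lemma aux_dual_pow (k : ℕ) (hk : k % 2 = 1) :
    ((1 : DualNumber (ZMod 2)) + DualNumber.eps) ^ k = 1 + DualNumber.eps := by
  obtain ⟨t, rfl⟩ : ∃ t, k = 2 * t + 1 := ⟨k / 2, by omega⟩
  rw [pow_add, pow_mul, aux_dual_sq, one_pow, one_mul, pow_one]

private lemma aux_eps_pow (k : ℕ) (hk : 2 ≤ k) :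
    (DualNumber.eps : DualNumber (ZMod 2)) ^ k = 0 := by
  have h : (DualNumber.eps : DualNumber (ZMod 2)) ^ k =
      DualNumber.eps ^ 2 * DualNumber.eps ^ (k - 2) := by
    rw [← pow_add]; congr 1; omega
  rw [h, sq, DualNumber.eps_mul_eps, zero_mul]

private lemma aux_pow2_inj {σ : Type*} (r : ℕ) (a b : MvPolynomial σ (ZMod 2))
    (h : a ^ 2 ^ r = b ^ 2 ^ r) : a = b := by
  induction r with
  | zero => simpa using h
  | succ r ih =>
    apply ih
    apply frobenius_inj (MvPolynomial σ (ZMod 2)) 2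
    simpa [frobenius_def, pow_succ, pow_mul] using h

private lemma aux_zmod2_pow (c : ZMod 2) (r : ℕ) : c ^ 2 ^ r = c := by
  induction r with
  | zero => simp
  | succ r ih => rw [pow_succ, pow_mul, ih, ZMod.pow_card]

private lemma aux_single' {n : ℕ} (d : Fin n →₀ ℕ) (h : ∑ i ∈ d.support, d i = 1) :
    ∃ j, d = Finsupp.single j 1 := by
  have hd0 : d ≠ 0 := by
    rintro rfl; simp at h
  obtain ⟨j, hj⟩ := Finsupp.support_nonempty_iff.mpr hd0
  refine ⟨j, ?_⟩
  have hsum := Finset.sum_eq_sum_sdiff_singleton_add hj (fun i => d i)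
  have hdj : 1 ≤ d j := Nat.one_le_iff_ne_zero.mpr (Finsupp.mem_support_iff.mp hj)
  have hrest : ∑ i ∈ d.support \ {j}, d i = 0 ∧ d j = 1 := by
    constructor <;> omega
  ext i
  rcases eq_or_ne i j with rfl | hij
  · simp [hrest.2]
  · rw [Finsupp.single_apply, if_neg (Ne.symm hij)]
    by_contra hne
    have hi : i ∈ d.support \ {j} := by
      simp [Finsupp.mem_support_iff, hne, hij]
    exact hne (Finset.sum_eq_zero_iff.mp hrest.1 i hi)

private lemma aux_deg1_span {n : ℕ} (p : MvPolynomial (Fin n) (ZMod 2))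
    (hp : p.IsHomogeneous 1) :
    p ∈ Submodule.span (ZMod 2) (Set.range (X : Fin n → MvPolynomial (Fin n) (ZMod 2))) := by
  rw [p.as_sum]
  apply Submodule.sum_mem
  intro d hd
  obtain ⟨j, rfl⟩ : ∃ j, d = Finsupp.single j 1 := by
    have h1 := hp (mem_support_iff.mp hd)
    change Finsupp.weight (fun _ => 1) d = 1 at h1
    rw [← Finsupp.degree_eq_weight_one] at h1
    exact aux_single' d h1
  rw [show monomial (Finsupp.single j 1) (coeff (Finsupp.single j 1) p)
      = coeff (Finsupp.single j 1) p • X j by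
    rw [smul_eq_C_mul, X, C_mul_monomial, mul_one]]
  exact Submodule.smul_mem _ _ (Submodule.subset_span ⟨j, rfl⟩)

end AuxStmt15

set_option maxHeartbeats 1000000 in
theorem stmt15 (n : ℕ) (hn : 1 ≤ n)
    (N : ℕ) (hN : 2 ≤ N) (hNpow : ∀ r : ℕ, N ≠ 2 ^ r)
    (y : Fin n → MvPolynomial (Fin n) (ZMod 2))
    (hyhom : ∀ i, (y i).IsHomogeneous 1)
    (hyind : LinearIndependent (ZMod 2) y)
    (hyspan : Submodule.span (ZMod 2) (Set.range y) =
      MvPolynomial.homogeneousSubmodule (Fin n) (ZMod 2) 1)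
    (z : MvPolynomial (Fin n) (ZMod 2))
    (hzhom : z.IsHomogeneous 1) (hz0 : z ≠ 0)
    (hzN : z ^ N ∈ Submodule.span (ZMod 2) (Set.range fun i => y i ^ N)) :
    ∃ i, z = y i := by
  have hone : ∀ c : ZMod 2, c ≠ 0 → c = 1 := by decide
  have hN0 : N ≠ 0 := by omega
  -- extract odd part
  obtain ⟨r, k, hkodd, hNfact⟩ : ∃ r k, ¬ 2 ∣ k ∧ 2 ^ r * k = N :=
    ⟨N.factorization 2, N / 2 ^ N.factorization 2,
      Nat.not_dvd_ordCompl Nat.prime_two hN0,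
      Nat.ordProj_mul_ordCompl_eq_self N 2⟩
  have hk1 : k ≠ 1 := fun h => hNpow r (by rw [← hNfact, h, mul_one])
  have hk0 : k ≠ 0 := by intro h0; rw [h0, mul_zero] at hNfact; omega
  have hk2 : 2 ≤ k := by omega
  have hkmod : k % 2 = 1 := Nat.two_dvd_ne_zero.mp hkodd
  -- coefficients c with z^N = ∑ c i • y i ^ N
  rw [Submodule.mem_span_range_iff_exists_fun] at hzN
  obtain ⟨c, hc⟩ := hzN
  -- Frobenius descent: z ^ k = ∑ c i • y i ^ k
  have hzk : z ^ k = ∑ i, c i • y i ^ k := by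
    apply aux_pow2_inj r
    rw [← pow_mul, mul_comm k, hNfact, sum_pow_char_pow, ← hc]
    congr 1
    funext i
    rw [smul_pow, aux_zmod2_pow, ← pow_mul, mul_comm k, hNfact]
  -- express z in terms of y
  have hzV : z ∈ Submodule.span (ZMod 2) (Set.range y) := by
    rw [hyspan]; exact hzhom
  rw [Submodule.mem_span_range_iff_exists_fun] at hzV
  obtain ⟨d, hd⟩ := hzV
  obtain ⟨p, hp⟩ : ∃ p, d p ≠ 0 := by
    by_contra h
    push_neg at h
    exact hz0 (by rw [← hd]; exact Finset.sum_eq_zero fun i _ => by rw [h i, zero_smul])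
  by_cases hq : ∃ q, q ≠ p ∧ d q ≠ 0
  swap
  · push_neg at hq
    refine ⟨p, ?_⟩
    rw [← hd, Finset.sum_eq_single p (fun b _ hbp => by rw [hq b hbp, zero_smul])
      (fun h => absurd (Finset.mem_univ p) h), hone _ hp, one_smul]
  exfalso
  obtain ⟨q, hqp, hq0⟩ := hq
  -- basis of degree-1 part
  set V := MvPolynomial.homogeneousSubmodule (Fin n) (ZMod 2) 1 with hV
  set y' : Fin n → V := fun i => ⟨y i, hyhom i⟩ with hy'
  have hcomp : y = V.subtype ∘ y' := rfl
  have hind' : LinearIndependent (ZMod 2) y' := by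
    rw [hcomp] at hyind
    exact hyind.of_comp V.subtype
  have hmap : Submodule.map V.subtype (Submodule.span (ZMod 2) (Set.range y'))
      = Submodule.map V.subtype ⊤ := by
    rw [Submodule.map_span, ← Set.range_comp, ← hcomp, hyspan,
      Submodule.map_top, Submodule.range_subtype]
  have hspan' : ⊤ ≤ Submodule.span (ZMod 2) (Set.range y') :=
    (Submodule.map_injective_of_injective V.injective_subtype hmap).ge
  set B : Module.Basis (Fin n) (ZMod 2) V := Module.Basis.mk hind' hspan' with hB
  have hBapp : ∀ i, B i = y' i := fun i => Module.Basis.mk_apply hind' hspan' i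
  -- the linear functional into dual numbers
  set f : V →ₗ[ZMod 2] DualNumber (ZMod 2) :=
    (B.coord p).smulRight 1 + (B.coord q).smulRight DualNumber.eps with hf
  set Fv : Fin n → DualNumber (ZMod 2) :=
    fun i => if i = p then 1 else if i = q then DualNumber.eps else 0 with hFv
  have hFvp : Fv p = 1 := by simp [hFv]
  have hFvq : Fv q = DualNumber.eps := by simp [hFv, hqp]
  have hfy : ∀ i, f (y' i) = Fv i := by
    intro i
    simp only [hf, hFv, LinearMap.add_apply, LinearMap.smulRight_apply, Module.Basis.coord_apply,
      ← hBapp i, Module.Basis.repr_self, Finsupp.single_apply]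
    rcases eq_or_ne i p with rfl | hip
    · rw [if_pos rfl, if_pos rfl, if_neg (Ne.symm hqp), one_smul, zero_smul, add_zero]
    · rcases eq_or_ne i q with rfl | hiq
      · rw [if_neg hip, if_pos rfl, if_neg hip, if_pos rfl, zero_smul, one_smul, zero_add]
      · rw [if_neg hip, if_neg hiq, if_neg hip, if_neg hiq, zero_smul, zero_smul, add_zero]
  -- evaluation point
  set v : Fin n → DualNumber (ZMod 2) :=
    fun j => f ⟨X j, isHomogeneous_X _ j⟩ with hv
  have heval : ∀ (w : MvPolynomial (Fin n) (ZMod 2)) (hw : w.IsHomogeneous 1),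
      aeval v w = f ⟨w, hw⟩ := by
    intro w hw
    obtain ⟨e, he⟩ := (Submodule.mem_span_range_iff_exists_fun (ZMod 2)).mp (aux_deg1_span w hw)
    have hsub : (⟨w, hw⟩ : V) = ∑ j, e j • (⟨X j, isHomogeneous_X _ j⟩ : V) := by
      apply Subtype.ext
      push_cast
      rw [he]
    rw [hsub, ← he, map_sum, map_sum]
    congr 1
    funext j
    rw [map_smul, map_smul, aeval_X]
  have hyeval : ∀ i, aeval v (y i) = Fv i := fun i => by
    rw [heval (y i) (hyhom i)]; exact hfy i
  have hzeval : aeval v z = 1 + DualNumber.eps := by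
    have hsub : (⟨z, hzhom⟩ : V) = ∑ j, d j • y' j := by
      apply Subtype.ext
      push_cast
      rw [hd]
    rw [heval z hzhom, hsub, map_sum]
    have hterm : ∀ j, f (d j • y' j) = d j • Fv j := fun j => by rw [map_smul, hfy]
    simp_rw [hterm]
    rw [Finset.sum_eq_add_of_mem p q (Finset.mem_univ p) (Finset.mem_univ q) (Ne.symm hqp)
      (fun e _ hec => by
        simp only [hFv]; rw [if_neg hec.1, if_neg hec.2, smul_zero])]
    rw [hFvp, hFvq, hone _ hp, hone _ hq0, one_smul, one_smul]
  -- apply evaluation to the key identity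
  have hkey := congrArg (aeval v) hzk
  rw [map_pow, hzeval, map_sum, aux_dual_pow k hkmod] at hkey
  have hrhs : ∀ i, (aeval v) (c i • y i ^ k) = c i • Fv i ^ k := fun i => by
    rw [map_smul, map_pow, hyeval]
  simp_rw [hrhs] at hkey
  rw [Finset.sum_eq_add_of_mem p q (Finset.mem_univ p) (Finset.mem_univ q) (Ne.symm hqp)
    (fun e _ he => by
      simp only [hFv]; rw [if_neg he.1, if_neg he.2, zero_pow hk0, smul_zero])] at hkey
  rw [hFvp, hFvq, aux_eps_pow k hk2, one_pow, smul_zero, add_zero] at hkey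
  have hsnd := congrArg TrivSqZeroExt.snd hkey
  rw [TrivSqZeroExt.snd_add, TrivSqZeroExt.snd_one, TrivSqZeroExt.snd_smul,
    TrivSqZeroExt.snd_one, smul_zero, DualNumber.snd_eps, zero_add] at hsnd
  exact one_ne_zero hsnd
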